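/- Let M be a Hadamard manifold, Ω ⊆ M a nonempty closed convex set, F : Ω × Ω → ℝ a monotone bifunction with F(x,x) = 0 for all x ∈ Ω, λ > 0 and x ∈ M. If z_1, z_2 ∈ Ω both satisfy λ F(z_i, y) + d(z_i, x) b_{γ_{z_i,x}}(y) ≥ 0 for all y ∈ Ω (the regularization term being 0 when z_i = x), then z_1 = z_2; i.e., the resolvent J_λ^F(x) := {z ∈ Ω : λ F(z,y) + d(z,x) b_{γ_{z,x}}(y) ≥ 0 for all y ∈ Ω} contains at most one point. -/
import Mathlib


open Set Filter

universe u v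

/-- An axiomatic model of an `n`-dimensional Hadamard manifold: a complete (proper) metric
space `M` (with `dist` the Riemannian distance) in which every pair of points `x, y` is joined
by a unique minimizing geodesic `geo x y : ℝ → M` (`geo x y t = exp_x (t • exp_x⁻¹ y)`),
satisfying the nonpositive-curvature comparison inequalities, in which every pair of distinct
points `z, x` determines a unique unit-speed geodesic ray `ray z x` starting at `z` and passing
through `x`, and in which, for each point `x`, the exponential map
`exp x : T_xM ≃ ℝⁿ → M` is a homeomorphism with inverse `log x` satisfying
`dist x y = ‖log x y‖`, jointly continuous in the footpoint (the tangent bundle `TM` with its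
Sasaki metric being globally trivialized as `M × ℝⁿ`). Euclidean space `ℝⁿ` is a model, so the
axioms are consistent. -/
class Hadamard (n : ℕ) (M : Type u) extends MetricSpace M where
  geo : M → M → ℝ → M
  geo_zero : ∀ x y : M, geo x y 0 = x
  geo_one : ∀ x y : M, geo x y 1 = y
  geo_dist : ∀ x y : M, ∀ s ∈ Set.Icc (0:ℝ) 1, ∀ t ∈ Set.Icc (0:ℝ) 1,
    dist (geo x y s) (geo x y t) = |s - t| * dist x y
  geo_unique : ∀ x y z : M, ∀ t ∈ Set.Icc (0:ℝ) 1,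
    dist x z = t * dist x y → dist z y = (1 - t) * dist x y → z = geo x y t
  dist_convex : ∀ x y x' y' : M, ∀ t ∈ Set.Icc (0:ℝ) 1,
    dist (geo x y t) (geo x' y' t) ≤ (1 - t) * dist x x' + t * dist y y'
  cn_ineq : ∀ x y p : M, ∀ t ∈ Set.Icc (0:ℝ) 1,
    dist (geo x y t) p ^ 2 ≤
      (1 - t) * dist x p ^ 2 + t * dist y p ^ 2 - t * (1 - t) * dist x y ^ 2
  ray : M → M → ℝ → M
  ray_zero : ∀ z x : M, z ≠ x → ray z x 0 = z
  ray_through : ∀ z x : M, z ≠ x → ray z x (dist z x) = x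
  ray_isom : ∀ z x : M, z ≠ x → ∀ s ∈ Set.Ici (0:ℝ), ∀ t ∈ Set.Ici (0:ℝ),
    dist (ray z x s) (ray z x t) = |s - t|
  exp : M → EuclideanSpace ℝ (Fin n) → M
  log : M → M → EuclideanSpace ℝ (Fin n)
  exp_log : ∀ x y : M, exp x (log x y) = y
  log_exp : ∀ (x : M) (v : EuclideanSpace ℝ (Fin n)), log x (exp x v) = v
  dist_log : ∀ x y : M, dist x y = ‖log x y‖
  exp_continuous : Continuous fun p : M × EuclideanSpace ℝ (Fin n) => exp p.1 p.2
  geo_exp : ∀ (x y : M) (t : ℝ), geo x y t = exp x (t • log x y)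
  properSpace : ProperSpace M

/-- A set `D` in a Hadamard manifold is convex if for any `x, y ∈ D` the geodesic segment
`γ_{x,y}([0,1])` is contained in `D`. -/
def GConvex (n : ℕ) {M : Type u} [Hadamard n M] (D : Set M) : Prop :=
  ∀ x ∈ D, ∀ y ∈ D, ∀ t ∈ Set.Icc (0:ℝ) 1, Hadamard.geo n x y t ∈ D

/-- A function `f` is convex on a convex set `D` if
`f (γ_{x,y}(t)) ≤ (1 - t) * f x + t * f y` for all `x, y ∈ D`, `t ∈ [0,1]`. -/
def GConvexOn (n : ℕ) {M : Type u} [Hadamard n M] (D : Set M) (f : M → ℝ) : Prop :=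
  ∀ x ∈ D, ∀ y ∈ D, ∀ t ∈ Set.Icc (0:ℝ) 1,
    f (Hadamard.geo n x y t) ≤ (1 - t) * f x + t * f y

/-- The convex hull of `B`: the smallest convex subset of `M` containing `B`. -/
def ghull (n : ℕ) {M : Type u} [Hadamard n M] (B : Set M) : Set M :=
  ⋂₀ {C : Set M | GConvex n C ∧ B ⊆ C}

/-- The Busemann function of the geodesic ray starting at `z` and passing through `x`,
evaluated at `y`:  `b_{γ_{z,x}}(y) = lim_{t → ∞} (d (y, γ_{z,x}(t)) - t)`
(junk value if the limit does not exist, e.g. if `z = x`). -/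
noncomputable def busemann (n : ℕ) {M : Type u} [Hadamard n M] (z x y : M) : ℝ :=
  limUnder atTop fun t : ℝ => dist y (Hadamard.ray n z x t) - t

section Aux
variable {n : ℕ} {M : Type u} [Hadamard n M]

lemma expz_cont (z : M) : Continuous (Hadamard.exp (n := n) z) :=
  Hadamard.exp_continuous.comp (Continuous.prodMk_right z)

lemma dist_exp (z : M) (v : EuclideanSpace ℝ (Fin n)) :
    dist z (Hadamard.exp (n := n) z v) = ‖v‖ := by
  rw [Hadamard.dist_log, Hadamard.log_exp]

lemma expz_closedMap (z : M) : IsClosedMap (Hadamard.exp (n := n) z) := by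
  haveI : ProperSpace M := Hadamard.properSpace
  intro C hC
  apply IsSeqClosed.isClosed
  intro u y hu huy
  choose v hvC hv using hu
  have hbd : ∃ R : ℝ, ∀ k, v k ∈ Metric.closedBall (0 : EuclideanSpace ℝ (Fin n)) R := by
    obtain ⟨R, hR⟩ := (Metric.isBounded_range_of_tendsto u huy).subset_closedBall z
    refine ⟨R, fun k => ?_⟩
    have : dist z (u k) ≤ R := by
      have := hR ⟨k, rfl⟩
      simpa [dist_comm] using this
    simp only [Metric.mem_closedBall, dist_zero_right]
    calc ‖v k‖ = dist z (Hadamard.exp z (v k)) := (dist_exp z (v k)).symm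
      _ = dist z (u k) := by rw [hv]
      _ ≤ R := this
  obtain ⟨R, hRmem⟩ := hbd
  obtain ⟨a, _, φ, hφ, hva⟩ := tendsto_subseq_of_bounded Metric.isBounded_closedBall hRmem
  have haC : a ∈ C := hC.mem_of_tendsto hva (Eventually.of_forall fun k => hvC (φ k))
  have h1 : Filter.Tendsto (fun k => Hadamard.exp z (v (φ k))) atTop (nhds (Hadamard.exp z a)) :=
    ((expz_cont z).tendsto a).comp hva
  have h2 : Filter.Tendsto (fun k => u (φ k)) atTop (nhds y) := huy.comp hφ.tendsto_atTop
  have : Hadamard.exp z a = y := by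
    refine tendsto_nhds_unique ?_ h2
    simpa only [hv] using h1
  exact ⟨a, haC, this⟩

lemma logz_cont (z : M) : Continuous (Hadamard.log (n := n) z) := by
  rw [continuous_iff_isClosed]
  intro C hC
  have : Hadamard.log (n := n) z ⁻¹' C = Hadamard.exp z '' C := by
    ext y
    constructor
    · intro hy
      exact ⟨Hadamard.log (n := n) z y, hy, Hadamard.exp_log z y⟩
    · rintro ⟨v, hv, rfl⟩
      simpa only [Set.mem_preimage, Hadamard.log_exp] using hv
  rw [this]
  exact expz_closedMap z C hC

end Aux
section Bus
variable {n : ℕ} {M : Type u} [Hadamard n M]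

lemma ray_dist_zero {z x : M} (hzx : z ≠ x) {t : ℝ} (ht : 0 ≤ t) :
    dist z (Hadamard.ray n z x t) = t := by
  have h := Hadamard.ray_isom (n := n) z x hzx 0 (Set.mem_Ici.mpr (le_refl 0)) t (Set.mem_Ici.mpr ht)
  rw [Hadamard.ray_zero (n := n) z x hzx] at h
  rw [h, abs_of_nonpos (by linarith), neg_sub, sub_zero]

lemma ray_dist_x {z x : M} (hzx : z ≠ x) {t : ℝ} (ht : dist z x ≤ t) :
    dist x (Hadamard.ray n z x t) = t - dist z x := by
  have h := Hadamard.ray_isom (n := n) z x hzx (dist z x) (Set.mem_Ici.mpr dist_nonneg) t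
    (Set.mem_Ici.mpr (le_trans dist_nonneg ht))
  rw [Hadamard.ray_through (n := n) z x hzx] at h
  rw [h, abs_of_nonpos (by linarith), neg_sub]

lemma busemann_tendsto {z x : M} (hzx : z ≠ x) (y : M) :
    Tendsto (fun t : ℝ => dist y (Hadamard.ray n z x t) - t) atTop
      (nhds (busemann n z x y)) := by
  set g : ℝ → ℝ := fun t => dist y (Hadamard.ray n z x t) - t with hg
  have anti : ∀ s t : ℝ, 0 ≤ s → s ≤ t → g t ≤ g s := by
    intro s t hs hst
    have h1 : dist y (Hadamard.ray n z x t) ≤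
        dist y (Hadamard.ray n z x s) + dist (Hadamard.ray n z x s) (Hadamard.ray n z x t) :=
      dist_triangle _ _ _
    have h2 := Hadamard.ray_isom (n := n) z x hzx s (Set.mem_Ici.mpr hs) t (Set.mem_Ici.mpr (le_trans hs hst))
    rw [abs_of_nonpos (by linarith), neg_sub] at h2
    simp only [hg]
    rw [h2] at h1
    linarith
  have lb : ∀ t : ℝ, 0 ≤ t → -(dist z y) ≤ g t := by
    intro t ht
    have h1 : dist z (Hadamard.ray n z x t) ≤ dist z y + dist y (Hadamard.ray n z x t) :=
      dist_triangle _ _ _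
    rw [ray_dist_zero hzx ht] at h1
    simp only [hg]; linarith
  have hne2 : (g '' Set.Ici (0:ℝ)).Nonempty := ⟨g 0, 0, Set.mem_Ici.mpr (le_refl 0), rfl⟩
  have hbdd : BddBelow (g '' Set.Ici (0:ℝ)) := by
    refine ⟨-(dist z y), ?_⟩
    rintro a ⟨t, ht, rfl⟩
    exact lb t ht
  set L := sInf (g '' Set.Ici (0:ℝ)) with hL
  have htend : Tendsto g atTop (nhds L) := by
    rw [tendsto_order]
    constructor
    · intro a ha
      filter_upwards [eventually_ge_atTop (0:ℝ)] with t ht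
      have : L ≤ g t := csInf_le hbdd ⟨t, ht, rfl⟩
      linarith
    · intro a ha
      obtain ⟨b, ⟨t₀, ht₀, rfl⟩, hba⟩ := exists_lt_of_csInf_lt hne2 ha
      filter_upwards [eventually_ge_atTop t₀] with t ht
      exact lt_of_le_of_lt (anti t₀ t ht₀ ht) hba
  have : busemann n z x y = L := htend.limUnder_eq
  rwa [this]

lemma busemann_le {z x : M} (hzx : z ≠ x) (y : M) {t : ℝ} (ht : 0 ≤ t) :
    busemann n z x y ≤ dist y (Hadamard.ray n z x t) - t := by
  refine le_of_tendsto (busemann_tendsto hzx y) ?_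
  filter_upwards [eventually_ge_atTop t] with s hs
  -- g s ≤ g t
  have h1 : dist y (Hadamard.ray n z x s) ≤
      dist y (Hadamard.ray n z x t) + dist (Hadamard.ray n z x t) (Hadamard.ray n z x s) :=
    dist_triangle _ _ _
  have h2 := Hadamard.ray_isom (n := n) z x hzx t (Set.mem_Ici.mpr ht) s (Set.mem_Ici.mpr (le_trans ht hs))
  rw [abs_of_nonpos (by linarith), neg_sub] at h2
  rw [h2] at h1
  linarith

lemma busemann_x {z x : M} (hzx : z ≠ x) : busemann n z x x = -(dist z x) := by
  have heq : (fun t : ℝ => dist x (Hadamard.ray n z x t) - t) =ᶠ[atTop]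
      (fun _ : ℝ => -(dist z x)) := by
    filter_upwards [eventually_ge_atTop (dist z x)] with t ht
    rw [ray_dist_x hzx ht]; ring
  have : Tendsto (fun t : ℝ => dist x (Hadamard.ray n z x t) - t) atTop
      (nhds (-(dist z x))) := tendsto_const_nhds.congr' heq.symm
  exact tendsto_nhds_unique (busemann_tendsto hzx x) this

end Bus
section Key
variable {n : ℕ} {M : Type u} [Hadamard n M]

lemma key_lemma {z₁ z₂ x : M} (h1 : z₁ ≠ x) (hd : dist z₂ x = dist z₁ x)
    (hb : busemann n z₁ x z₂ = 0) : z₁ = z₂ := by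
  haveI : ProperSpace M := Hadamard.properSpace
  set d : ℝ := dist z₁ x with hdd
  have hdpos : 0 < d := dist_pos.mpr h1
  set D : ℝ := dist z₁ z₂ with hD
  have hD0 : 0 ≤ D := dist_nonneg
  set r : ℝ → M := fun T => Hadamard.ray n z₁ x T with hr
  set g : ℝ → ℝ := fun T => dist z₂ (r T) with hg
  have hη : Tendsto (fun T => g T - T) atTop (nhds (0:ℝ)) := by
    have h := busemann_tendsto (n := n) h1 z₂
    rw [hb] at h
    exact h
  have hglb : ∀ T : ℝ, 0 ≤ T → T - D ≤ g T := by
    intro T hT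
    have h1' : dist z₁ (r T) ≤ dist z₁ z₂ + dist z₂ (r T) := dist_triangle _ _ _
    rw [show dist z₁ (r T) = T from ray_dist_zero h1 hT] at h1'
    simp only [hg]
    linarith
  have hgtop : Tendsto g atTop atTop := by
    refine tendsto_atTop_mono' atTop ?_ (tendsto_atTop_add_const_right atTop (-D) tendsto_id)
    filter_upwards [eventually_ge_atTop (0:ℝ)] with T hT
    have := hglb T hT
    show id T + -D ≤ g T
    simp only [id]
    linarith
  have hginv : Tendsto (fun T => (g T)⁻¹) atTop (nhds 0) := hgtop.inv_tendsto_atTop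
  -- the comparison function
  set Φ : ℝ → ℝ := fun T =>
    2*d^2 - d^3*(g T)⁻¹ - d*(d + (g T - T))*(2 - ((g T - T) + d)*(g T)⁻¹) with hΦdef
  have hΦ0 : Tendsto Φ atTop (nhds 0) := by
    have h : Tendsto Φ atTop
        (nhds ((2*d^2 - d^3*0) - d*(d+0)*(2 - (0+d)*0))) := by
      apply Tendsto.sub
      · exact tendsto_const_nhds.sub (tendsto_const_nhds.mul hginv)
      · exact (tendsto_const_nhds.mul (tendsto_const_nhds.add hη)).mul
          (tendsto_const_nhds.sub ((hη.add tendsto_const_nhds).mul hginv))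
    have h0 : (2*d^2 - d^3*(0:ℝ)) - d*(d+0)*(2 - (0+d)*0) = 0 := by ring
    rwa [h0] at h
  have hmain : ∀ᶠ T in atTop,
      dist (Hadamard.geo n z₂ (r T) (d / g T)) x ^ 2 ≤ Φ T := by
    filter_upwards [eventually_ge_atTop (D + 2*d + 1)] with T hT
    have hgT : 2*d + 1 ≤ g T := by
      have := hglb T (by linarith)
      linarith
    have hgpos : 0 < g T := by linarith
    have hmem : d / g T ∈ Set.Icc (0:ℝ) 1 :=
      ⟨div_nonneg hdpos.le hgpos.le, by rw [div_le_one hgpos]; linarith⟩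
    have hcn := Hadamard.cn_ineq (n := n) z₂ (r T) x (d / g T) hmem
    have hrx : dist (r T) x = T - d := by
      rw [dist_comm]
      exact ray_dist_x h1 (by linarith)
    have hgdef : dist z₂ (r T) = g T := rfl
    rw [hd, hrx, hgdef] at hcn
    have hid : (1 - d/(g T))*d^2 + (d/(g T))*(T-d)^2 - (d/(g T))*(1-d/(g T))*(g T)^2
        = Φ T := by
      simp only [hΦdef]
      field_simp
      ring
    linarith [hcn]
  have hsq : Tendsto (fun T => dist (Hadamard.geo n z₂ (r T) (d / g T)) x ^ 2) atTop
      (nhds 0) :=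
    squeeze_zero' (Eventually.of_forall fun T => sq_nonneg _) hmain hΦ0
  have hpd : Tendsto (fun T => dist (Hadamard.geo n z₂ (r T) (d / g T)) x) atTop (nhds 0) := by
    have h := (Real.continuous_sqrt.tendsto 0).comp hsq
    rw [Real.sqrt_zero] at h
    refine h.congr fun T => ?_
    exact Real.sqrt_sq dist_nonneg
  have hp : Tendsto (fun T => Hadamard.geo n z₂ (r T) (d / g T)) atTop (nhds x) :=
    tendsto_iff_dist_tendsto_zero.mpr hpd
  have hlog : Tendsto (fun T => Hadamard.log (n := n) z₂ (Hadamard.geo n z₂ (r T) (d / g T)))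
      atTop (nhds (Hadamard.log (n := n) z₂ x)) := ((logz_cont z₂).tendsto x).comp hp
  set X : EuclideanSpace ℝ (Fin n) := Hadamard.log (n := n) z₂ x with hX
  set w : M := Hadamard.exp z₂ ((2:ℝ) • X) with hw
  have ha : Tendsto (fun T => Hadamard.exp z₂
      ((2:ℝ) • Hadamard.log (n := n) z₂ (Hadamard.geo n z₂ (r T) (d / g T)))) atTop (nhds w) :=
    ((expz_cont z₂).tendsto _).comp (hlog.const_smul (2:ℝ))
  have hXnorm : ‖X‖ = d := by rw [hX, ← Hadamard.dist_log, hd]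
  have hzw : dist z₂ w = 2*d := by
    rw [hw, dist_exp, norm_smul, hXnorm]
    norm_num
  have hgeohalf : Hadamard.geo n z₂ w (1/2) = x := by
    rw [Hadamard.geo_exp, hw, Hadamard.log_exp, smul_smul,
      show ((1/2 : ℝ) * 2) = 1 by norm_num, one_smul]
    exact Hadamard.exp_log z₂ x
  have hxw : dist x w = d := by
    have h := Hadamard.geo_dist (n := n) z₂ w (1/2) (by norm_num) 1 (by norm_num)
    rw [Hadamard.geo_one, hgeohalf, hzw] at h
    rw [h, abs_of_nonpos (by norm_num : (1/2 - 1 : ℝ) ≤ 0)]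
    ring
  have hz₁w : dist z₁ w = 2*d := by
    refine le_antisymm ?_ ?_
    · calc dist z₁ w ≤ dist z₁ x + dist x w := dist_triangle _ _ _
        _ = 2*d := by rw [hxw]; ring
    · -- lower bound via the rays
      have hbound : ∀ᶠ T in atTop,
          2*d - (g T - T) - dist (Hadamard.exp z₂
            ((2:ℝ) • Hadamard.log (n := n) z₂ (Hadamard.geo n z₂ (r T) (d / g T)))) w
            ≤ dist z₁ w := by
        filter_upwards [eventually_ge_atTop (D + 2*d + 1)] with T hT
        have hgT : 2*d + 1 ≤ g T := by
          have := hglb T (by linarith)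
          linarith
        have hgpos : 0 < g T := by linarith
        set aT : M := Hadamard.exp z₂
          ((2:ℝ) • Hadamard.log (n := n) z₂ (Hadamard.geo n z₂ (r T) (d / g T))) with haT
        have haT' : aT = Hadamard.geo n z₂ (r T) (2*d / g T) := by
          rw [haT, Hadamard.geo_exp z₂ (r T) (d / g T), Hadamard.log_exp,
            Hadamard.geo_exp z₂ (r T) (2*d / g T), smul_smul,
            show (2:ℝ) * (d / g T) = 2*d / g T by ring]
        have hdar : dist aT (r T) = g T - 2*d := by
          have h := Hadamard.geo_dist (n := n) z₂ (r T) (2*d / g T)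
            ⟨by positivity, by rw [div_le_one hgpos]; linarith⟩ 1 (by norm_num)
          rw [Hadamard.geo_one] at h
          have hgdef : dist z₂ (r T) = g T := rfl
          rw [hgdef] at h
          rw [haT', h, abs_of_nonpos, neg_sub]
          · field_simp
          · rw [sub_nonpos, div_le_one hgpos]
            linarith
        have hz1r : dist z₁ (r T) = T := ray_dist_zero h1 (by linarith)
        have htri : dist z₁ (r T) ≤ dist z₁ w + dist w aT + dist aT (r T) :=
          dist_triangle4 _ _ _ _
        rw [hz1r, hdar] at htri
        rw [dist_comm w aT] at htri
        linarith
      have hlim : Tendsto (fun T => 2*d - (g T - T) - dist (Hadamard.exp z₂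
          ((2:ℝ) • Hadamard.log (n := n) z₂ (Hadamard.geo n z₂ (r T) (d / g T)))) w) atTop
          (nhds (2*d - 0 - 0)) := by
        refine Tendsto.sub (Tendsto.sub tendsto_const_nhds hη) ?_
        have := ha.dist (tendsto_const_nhds (x := w))
        simpa using this
      have h2d : (2*d - 0 - 0 : ℝ) = 2*d := by ring
      rw [h2d] at hlim
      exact le_of_tendsto hlim hbound
  -- final step: x is the midpoint of both [w,z₁] and [w,z₂]
  have hxz₁ : dist x z₁ = d := by rw [dist_comm]
  have hxz₂ : dist x z₂ = d := by rw [dist_comm]; exact hd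
  have hmid₁ : x = Hadamard.geo n w z₁ (1/2) := by
    refine Hadamard.geo_unique (n := n) w z₁ x (1/2) (by norm_num) ?_ ?_
    · rw [dist_comm w x, hxw, dist_comm w z₁, hz₁w]; ring
    · rw [hxz₁, dist_comm w z₁, hz₁w]; ring
  have hmid₂ : x = Hadamard.geo n w z₂ (1/2) := by
    refine Hadamard.geo_unique (n := n) w z₂ x (1/2) (by norm_num) ?_ ?_
    · rw [dist_comm w x, hxw, dist_comm w z₂, hzw]; ring
    · rw [hxz₂, dist_comm w z₂, hzw]; ring
  have hlogeq : (1/2 : ℝ) • Hadamard.log (n := n) w z₁ = (1/2 : ℝ) • Hadamard.log (n := n) w z₂ := by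
    have e₁ : Hadamard.log (n := n) w x = (1/2 : ℝ) • Hadamard.log (n := n) w z₁ := by
      rw [hmid₁, Hadamard.geo_exp, Hadamard.log_exp]
    have e₂ : Hadamard.log (n := n) w x = (1/2 : ℝ) • Hadamard.log (n := n) w z₂ := by
      rw [hmid₂, Hadamard.geo_exp, Hadamard.log_exp]
    rw [← e₁, ← e₂]
  have hloge : Hadamard.log (n := n) w z₁ = Hadamard.log (n := n) w z₂ :=
    smul_right_injective _ (by norm_num : (1/2 : ℝ) ≠ 0) hlogeq
  calc z₁ = Hadamard.exp w (Hadamard.log (n := n) w z₁) := (Hadamard.exp_log w z₁).symm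
    _ = Hadamard.exp w (Hadamard.log (n := n) w z₂) := by rw [hloge]
    _ = z₂ := Hadamard.exp_log w z₂

end Key
/-- Let `M` be a Hadamard manifold, `Ω ⊆ M` nonempty closed convex,
`F : Ω × Ω → ℝ` a monotone bifunction with `F(x,x) = 0`, `λ > 0` and `x ∈ M`.  If
`z₁, z₂ ∈ Ω` both satisfy `λ F(z_i, y) + d(z_i, x) b_{γ_{z_i,x}}(y) ≥ 0` for all `y ∈ Ω`
(the regularization term being `0` when `z_i = x`, as then `d(z_i,x) = 0`), then
`z₁ = z₂`: the resolvent `J_λ^F(x)` contains at most one point. -/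
theorem resolvent_subsingleton {n : ℕ} {M : Type u} [Hadamard n M]
    {Ω : Set M} (hne : Ω.Nonempty) (hcl : IsClosed Ω) (hconv : GConvex n Ω)
    (F : M → M → ℝ) (hdiag : ∀ x ∈ Ω, F x x = 0)
    (hmono : ∀ x ∈ Ω, ∀ y ∈ Ω, F x y + F y x ≤ 0)
    {lam : ℝ} (hlam : 0 < lam) (x : M)
    {z₁ z₂ : M} (hz₁ : z₁ ∈ Ω) (hz₂ : z₂ ∈ Ω)
    (h₁ : ∀ y ∈ Ω, 0 ≤ lam * F z₁ y + dist z₁ x * busemann n z₁ x y)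
    (h₂ : ∀ y ∈ Ω, 0 ≤ lam * F z₂ y + dist z₂ x * busemann n z₂ x y) :
    z₁ = z₂ := by
  have A := h₁ z₂ hz₂
  have B := h₂ z₁ hz₁
  have C : lam * F z₁ z₂ + lam * F z₂ z₁ ≤ 0 := by
    rw [← mul_add]
    exact mul_nonpos_of_nonneg_of_nonpos hlam.le (hmono z₁ hz₁ z₂ hz₂)
  have key0 : 0 ≤ dist z₁ x * busemann n z₁ x z₂ + dist z₂ x * busemann n z₂ x z₁ := by
    linarith
  by_cases hx1 : z₁ = x
  · by_cases hx2 : z₂ = x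
    · rw [hx1, hx2]
    · -- z₁ = x, z₂ ≠ x
      subst hx1
      rw [dist_self, zero_mul, zero_add, busemann_x hx2] at key0
      have h0 : dist z₂ z₁ = 0 := by nlinarith [dist_nonneg (x := z₂) (y := z₁)]
      exact (dist_eq_zero.mp h0).symm
  · by_cases hx2 : z₂ = x
    · subst hx2
      rw [dist_self, zero_mul, add_zero, busemann_x hx1] at key0
      have h0 : dist z₁ z₂ = 0 := by nlinarith [dist_nonneg (x := z₁) (y := z₂)]
      exact dist_eq_zero.mp h0
    · -- both distinct from x
      have hd1 : 0 < dist z₁ x := dist_pos.mpr hx1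
      have hd2 : 0 < dist z₂ x := dist_pos.mpr hx2
      have hb1 : busemann n z₁ x z₂ ≤ dist z₂ x - dist z₁ x := by
        have h := busemann_le (n := n) hx1 z₂ (t := dist z₁ x) dist_nonneg
        rwa [Hadamard.ray_through (n := n) z₁ x hx1] at h
      have hb2 : busemann n z₂ x z₁ ≤ dist z₁ x - dist z₂ x := by
        have h := busemann_le (n := n) hx2 z₁ (t := dist z₂ x) dist_nonneg
        rwa [Hadamard.ray_through (n := n) z₂ x hx2] at h
      have hdeq : dist z₁ x = dist z₂ x := by
        nlinarith [mul_le_mul_of_nonneg_left hb1 hd1.le,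
          mul_le_mul_of_nonneg_left hb2 hd2.le, sq_nonneg (dist z₁ x - dist z₂ x)]
      have hbz : busemann n z₁ x z₂ = 0 := by
        have hb1' : busemann n z₁ x z₂ ≤ 0 := by rw [hdeq] at hb1; linarith
        have hb2' : busemann n z₂ x z₁ ≤ 0 := by rw [hdeq] at hb2; linarith
        refine le_antisymm hb1' ?_
        nlinarith [mul_nonpos_of_nonneg_of_nonpos hd2.le hb2']
      exact key_lemma hx1 hdeq.symm hbz
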